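/- Let m : ℕ and let V ⊆ (Fin m → ZMod 2) be a doubly even code spanned by linearly independent vectors v₁, v₂, v₃, v₄ such that: |v_i| ≡ 0 (mod 8) for i = 1,2,3 and |v₄| ≡ 4 (mod 8); |supp v₁ ∩ supp v₂| ≡ 2 (mod 4), |supp v₁ ∩ supp v₃| ≡ 2 (mod 4), |supp v₁ ∩ supp v₄| ≡ 2 (mod 4), |supp v₂ ∩ supp v₃| ≡ 0 (mod 4), |supp v₂ ∩ supp v₄| ≡ 0 (mod 4), |supp v₃ ∩ supp v₄| ≡ 0 (mod 4); |supp v₁ ∩ supp v₂ ∩ supp v₃| is odd and |supp v_i ∩ supp v_j ∩ supp v₄| is even for 1 ≤ i < j ≤ 3; and every coordinate k ∈ Fin m lies in the support of some element of V. Then m ≥ 19, and if m = 19 then some permutation of the 19 coordinates maps V onto the code spanned by the indicator vectors of {1,...,8}, {1,2,9,10,11,12,13,14}, {1,3,9,10,11,15,16,17} and {4,5,18,19}. -/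

import Mathlib

/-- The support of a vector in `F₂^m`, as a finset of coordinates. -/
def supp {m : ℕ} (v : Fin m → ZMod 2) : Finset (Fin m) :=
  Finset.univ.filter fun k => v k ≠ 0

/-- The indicator vector in `F₂^m` of a set of (1-based) coordinate labels. -/
def indVec {m : ℕ} (S : Finset ℕ) : Fin m → ZMod 2 :=
  fun k => if (k : ℕ) + 1 ∈ S then 1 else 0

/-- The linear automorphism of `F₂^m` permuting coordinates by `π`. -/
def permMap {m : ℕ} (π : Equiv.Perm (Fin m)) :
    (Fin m → ZMod 2) →ₗ[ZMod 2] (Fin m → ZMod 2) where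
  toFun v := v ∘ π
  map_add' _ _ := rfl
  map_smul' _ _ := rfl

set_option maxHeartbeats 2000000

/-- The type of a coordinate: the quadruple of values of the four generators there. -/
abbrev Z4 : Type := ZMod 2 × ZMod 2 × ZMod 2 × ZMod 2

/-- The type map of four generating vectors. -/
def typF {m : ℕ} (v₁ v₂ v₃ v₄ : Fin m → ZMod 2) (k : Fin m) : Z4 :=
  (v₁ k, v₂ k, v₃ k, v₄ k)

theorem card_filter_typ {m : ℕ} (f : Fin m → Z4) (p : Z4 → Prop) [DecidablePred p] :
    (Finset.univ.filter fun k => p (f k)).card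
      = ∑ t ∈ Finset.univ.filter p, (Finset.univ.filter fun k => f k = t).card := by
  rw [Finset.card_eq_sum_card_fiberwise
    (f := f) (t := Finset.univ.filter p)
    (fun x hx => Finset.mem_filter.2 ⟨Finset.mem_univ _, (Finset.mem_filter.1 hx).2⟩)]
  refine Finset.sum_congr rfl fun t ht => ?_
  congr 1
  rw [Finset.filter_filter]
  refine Finset.filter_congr fun k _ => ?_
  have hp : p t := (Finset.mem_filter.1 ht).2
  exact ⟨And.right, fun h => ⟨h ▸ hp, h⟩⟩

theorem exists_perm_of_card_fiber_eq {n : ℕ} (f g : Fin n → Z4)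
    (h : ∀ t, (Finset.univ.filter fun k => f k = t).card
      = (Finset.univ.filter fun k => g k = t).card) :
    ∃ π : Equiv.Perm (Fin n), ∀ k, f (π k) = g k := by
  have hc : ∀ t : Z4, Fintype.card {x // g x = t} = Fintype.card {x // f x = t} := by
    intro t
    rw [Fintype.card_subtype, Fintype.card_subtype]
    exact (h t).symm
  refine ⟨((Equiv.sigmaFiberEquiv g).symm.trans
    (Equiv.sigmaCongrRight fun t => Fintype.equivOfCardEq (hc t))).trans
    (Equiv.sigmaFiberEquiv f), fun k => ?_⟩
  exact (Fintype.equivOfCardEq (hc (g k)) ⟨k, rfl⟩).2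


theorem bAuxB14 (b0001 b0010 b0011 b0100 b0101 b0110 b0111 b1000 b1001 b1010 b1011 b1100 b1101 b1110 b1111 : ℕ)
    (c1 : (b1000+b1001+b1010+b1011+b1100+b1101+b1110+b1111) % 4 = 2) (c4 : (b0001+b0011+b0101+b0111+b1001+b1011+b1101+b1111) % 4 = 2) (c14 : (b1001+b1011+b1101+b1111) % 2 = 1)
    (hT6 : b0001+b0010+b0011+b0100+b0101+b0110+b0111+b1000+b1001+b1010+b1011+b1100+b1101+b1110+b1111 ≤ 6) : (b1000+b1001+b1010+b1011+b1100+b1101+b1110+b1111) = 2 ∧ (b0001+b0011+b0101+b0111+b1001+b1011+b1101+b1111) = 2 := by omega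

theorem bAuxB23 (b0001 b0010 b0011 b0100 b0101 b0110 b0111 b1000 b1001 b1010 b1011 b1100 b1101 b1110 b1111 : ℕ)
    (c2 : (b0100+b0101+b0110+b0111+b1100+b1101+b1110+b1111) % 4 = 2) (c3 : (b0010+b0011+b0110+b0111+b1010+b1011+b1110+b1111) % 4 = 2) (c23 : (b0110+b0111+b1110+b1111) % 2 = 1)
    (hT6 : b0001+b0010+b0011+b0100+b0101+b0110+b0111+b1000+b1001+b1010+b1011+b1100+b1101+b1110+b1111 ≤ 6) : (b0100+b0101+b0110+b0111+b1100+b1101+b1110+b1111) = 2 ∧ (b0010+b0011+b0110+b0111+b1010+b1011+b1110+b1111) = 2 := by omega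

theorem bAux1111 (b1000 b1001 b1010 b1011 b1100 b1101 b1110 b1111 b0110 b0111 : ℕ)
    (f1 : b1000+b1001+b1010+b1011+b1100+b1101+b1110+b1111 = 2) (c12 : (b1100+b1101+b1110+b1111) % 2 = 0) (c13 : (b1010+b1011+b1110+b1111) % 2 = 0)
    (q14 : b1001+b1011+b1101+b1111 = 1) (q23 : b0110+b0111+b1110+b1111 = 1) : b1111 = 0 := by omega

theorem bAux1110 (b1000 b1001 b1010 b1011 b1100 b1101 b1110 b1111 : ℕ)
    (f1 : b1000+b1001+b1010+b1011+b1100+b1101+b1110+b1111 = 2) (c12 : (b1100+b1101+b1110+b1111) % 2 = 0) (c13 : (b1010+b1011+b1110+b1111) % 2 = 0)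
    (q14 : b1001+b1011+b1101+b1111 = 1) (z1111 : b1111 = 0) : b1110 = 0 := by omega

theorem bAux1011 (b0001 b0010 b0011 b0100 b0101 b0110 b0111 b1000 b1001 b1010 b1011 b1100 b1101 b1110 b1111 : ℕ)
    (f1 : b1000+b1001+b1010+b1011+b1100+b1101+b1110+b1111 = 2) (f2 : b0100+b0101+b0110+b0111+b1100+b1101+b1110+b1111 = 2) (f3 : b0010+b0011+b0110+b0111+b1010+b1011+b1110+b1111 = 2) (f4 : b0001+b0011+b0101+b0111+b1001+b1011+b1101+b1111 = 2)
    (c12 : (b1100+b1101+b1110+b1111) % 2 = 0) (c13 : (b1010+b1011+b1110+b1111) % 2 = 0) (q14 : b1001+b1011+b1101+b1111 = 1) (q23 : b0110+b0111+b1110+b1111 = 1)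
    (c24 : (b0101+b0111+b1101+b1111) % 2 = 0) (c34 : (b0011+b0111+b1011+b1111) % 2 = 0) (z1111 : b1111 = 0) (z1110 : b1110 = 0) :
    b1011 = 0 ∧ b1101 = 0 := by omega

theorem bAuxRest (b0001 b0010 b0011 b0100 b0101 b0110 b0111 b1000 b1001 b1010 b1011 b1100 b1101 b1110 b1111 : ℕ)
    (f1 : b1000+b1001+b1010+b1011+b1100+b1101+b1110+b1111 = 2) (f2 : b0100+b0101+b0110+b0111+b1100+b1101+b1110+b1111 = 2) (f3 : b0010+b0011+b0110+b0111+b1010+b1011+b1110+b1111 = 2) (f4 : b0001+b0011+b0101+b0111+b1001+b1011+b1101+b1111 = 2)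
    (c12 : (b1100+b1101+b1110+b1111) % 2 = 0) (c13 : (b1010+b1011+b1110+b1111) % 2 = 0) (q14 : b1001+b1011+b1101+b1111 = 1) (q23 : b0110+b0111+b1110+b1111 = 1)
    (c24 : (b0101+b0111+b1101+b1111) % 2 = 0) (c34 : (b0011+b0111+b1011+b1111) % 2 = 0) (z1111 : b1111 = 0) (z1110 : b1110 = 0)
    (z1011 : b1011 = 0) (z1101 : b1101 = 0) :
    b0001 = 1 ∧ b0010 = 1 ∧ b0011 = 0 ∧ b0100 = 1 ∧ b0101 = 0 ∧ b0110 = 1 ∧ b0111 = 0 ∧ b1000 = 1 ∧ b1001 = 1 ∧ b1010 = 0 ∧ b1100 = 0 := by omega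

theorem aCore (a0001 a0010 a0011 a0100 a0101 a0110 a0111 a1000 a1001 a1010 a1011 a1100 a1101 a1110 a1111 m : ℕ)
    (hm : m = a0001 + (a0010 + (a0011 + (a0100 + (a0101 + (a0110 + (a0111 + (a1000 + (a1001 + (a1010 + (a1011 + (a1100 + (a1101 + (a1110 + a1111))))))))))))))
    (h1 : (a1000 + (a1001 + (a1010 + (a1011 + (a1100 + (a1101 + (a1110 + a1111))))))) % 8 = 0)
    (h2 : (a0100 + (a0101 + (a0110 + (a0111 + (a1100 + (a1101 + (a1110 + a1111))))))) % 8 = 0)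
    (h3 : (a0010 + (a0011 + (a0110 + (a0111 + (a1010 + (a1011 + (a1110 + a1111))))))) % 8 = 0)
    (h4 : (a0001 + (a0011 + (a0101 + (a0111 + (a1001 + (a1011 + (a1101 + a1111))))))) % 8 = 4)
    (h12 : (a1100 + (a1101 + (a1110 + a1111))) % 4 = 2)
    (h13 : (a1010 + (a1011 + (a1110 + a1111))) % 4 = 2)
    (h14 : (a1001 + (a1011 + (a1101 + a1111))) % 4 = 2)
    (h23 : (a0110 + (a0111 + (a1110 + a1111))) % 4 = 0)
    (h24 : (a0101 + (a0111 + (a1101 + a1111))) % 4 = 0)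
    (h34 : (a0011 + (a0111 + (a1011 + a1111))) % 4 = 0)
    (h123 : (a1110 + a1111) % 2 = 1)
    (h124 : (a1101 + a1111) % 2 = 0)
    (h134 : (a1011 + a1111) % 2 = 0)
    (h234 : (a0111 + a1111) % 2 = 0)
    : 19 ≤ m ∧ (m = 19 → a0001 = 2 ∧ a0010 = 3 ∧ a0011 = 0 ∧ a0100 = 3 ∧ a0101 = 0 ∧ a0110 = 3 ∧ a0111 = 0 ∧ a1000 = 3 ∧ a1001 = 2 ∧ a1010 = 1 ∧ a1011 = 0 ∧ a1100 = 1 ∧ a1101 = 0 ∧ a1110 = 1 ∧ a1111 = 0) := by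
  have key : m ≤ 19 → (m = 19 ∧ a0001 = 2 ∧ a0010 = 3 ∧ a0011 = 0 ∧ a0100 = 3 ∧ a0101 = 0 ∧ a0110 = 3 ∧ a0111 = 0 ∧ a1000 = 3 ∧ a1001 = 2 ∧ a1010 = 1 ∧ a1011 = 0 ∧ a1100 = 1 ∧ a1101 = 0 ∧ a1110 = 1 ∧ a1111 = 0) := by
    intro hb
    rcases Nat.mod_two_eq_zero_or_one a1111 with hq | hq
    · -- a1111 even
      have p1110 : a1110 % 2 = 1 := by clear * - h123 hq; omega
      have p1101 : a1101 % 2 = 0 := by clear * - h124 hq; omega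
      have p1011 : a1011 % 2 = 0 := by clear * - h134 hq; omega
      have p0111 : a0111 % 2 = 0 := by clear * - h234 hq; omega
      have p1100 : a1100 % 2 = 1 := by clear * - h12 p1101 p1110 hq; omega
      have p1010 : a1010 % 2 = 1 := by clear * - h13 p1011 p1110 hq; omega
      have p1001 : a1001 % 2 = 0 := by clear * - h14 p1011 p1101 hq; omega
      have p0110 : a0110 % 2 = 1 := by clear * - h23 p0111 p1110 hq; omega
      have p0101 : a0101 % 2 = 0 := by clear * - h24 p0111 p1101 hq; omega
      have p0011 : a0011 % 2 = 0 := by clear * - h34 p0111 p1011 hq; omega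
      have p1000 : a1000 % 2 = 1 := by clear * - h1 p1001 p1010 p1011 p1100 p1101 p1110 hq; omega
      have p0100 : a0100 % 2 = 1 := by clear * - h2 p0101 p0110 p0111 p1100 p1101 p1110 hq; omega
      have p0010 : a0010 % 2 = 1 := by clear * - h3 p0011 p0110 p0111 p1010 p1011 p1110 hq; omega
      have p0001 : a0001 % 2 = 0 := by clear * - h4 p0011 p0101 p0111 p1001 p1011 p1101 hq; omega
      obtain ⟨b0001, e0001⟩ : ∃ b, a0001 = 2*b := ⟨a0001/2, by clear * - p0001; omega⟩
      obtain ⟨b0010, e0010⟩ : ∃ b, a0010 = 2*b+1 := ⟨a0010/2, by clear * - p0010; omega⟩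
      obtain ⟨b0011, e0011⟩ : ∃ b, a0011 = 2*b := ⟨a0011/2, by clear * - p0011; omega⟩
      obtain ⟨b0100, e0100⟩ : ∃ b, a0100 = 2*b+1 := ⟨a0100/2, by clear * - p0100; omega⟩
      obtain ⟨b0101, e0101⟩ : ∃ b, a0101 = 2*b := ⟨a0101/2, by clear * - p0101; omega⟩
      obtain ⟨b0110, e0110⟩ : ∃ b, a0110 = 2*b+1 := ⟨a0110/2, by clear * - p0110; omega⟩
      obtain ⟨b0111, e0111⟩ : ∃ b, a0111 = 2*b := ⟨a0111/2, by clear * - p0111; omega⟩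
      obtain ⟨b1000, e1000⟩ : ∃ b, a1000 = 2*b+1 := ⟨a1000/2, by clear * - p1000; omega⟩
      obtain ⟨b1001, e1001⟩ : ∃ b, a1001 = 2*b := ⟨a1001/2, by clear * - p1001; omega⟩
      obtain ⟨b1010, e1010⟩ : ∃ b, a1010 = 2*b+1 := ⟨a1010/2, by clear * - p1010; omega⟩
      obtain ⟨b1011, e1011⟩ : ∃ b, a1011 = 2*b := ⟨a1011/2, by clear * - p1011; omega⟩
      obtain ⟨b1100, e1100⟩ : ∃ b, a1100 = 2*b+1 := ⟨a1100/2, by clear * - p1100; omega⟩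
      obtain ⟨b1101, e1101⟩ : ∃ b, a1101 = 2*b := ⟨a1101/2, by clear * - p1101; omega⟩
      obtain ⟨b1110, e1110⟩ : ∃ b, a1110 = 2*b+1 := ⟨a1110/2, by clear * - p1110; omega⟩
      obtain ⟨b1111, e1111⟩ : ∃ b, a1111 = 2*b := ⟨a1111/2, by clear * - hq; omega⟩
      have c1 : (b1000+b1001+b1010+b1011+b1100+b1101+b1110+b1111) % 4 = 2 := by clear * - h1 e1000 e1001 e1010 e1011 e1100 e1101 e1110 e1111; omega
      have c2 : (b0100+b0101+b0110+b0111+b1100+b1101+b1110+b1111) % 4 = 2 := by clear * - h2 e0100 e0101 e0110 e0111 e1100 e1101 e1110 e1111; omega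
      have c3 : (b0010+b0011+b0110+b0111+b1010+b1011+b1110+b1111) % 4 = 2 := by clear * - h3 e0010 e0011 e0110 e0111 e1010 e1011 e1110 e1111; omega
      have c4 : (b0001+b0011+b0101+b0111+b1001+b1011+b1101+b1111) % 4 = 2 := by clear * - h4 e0001 e0011 e0101 e0111 e1001 e1011 e1101 e1111; omega
      have c12 : (b1100+b1101+b1110+b1111) % 2 = 0 := by clear * - h12 e1100 e1101 e1110 e1111; omega
      have c13 : (b1010+b1011+b1110+b1111) % 2 = 0 := by clear * - h13 e1010 e1011 e1110 e1111; omega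
      have c14 : (b1001+b1011+b1101+b1111) % 2 = 1 := by clear * - h14 e1001 e1011 e1101 e1111; omega
      have c23 : (b0110+b0111+b1110+b1111) % 2 = 1 := by clear * - h23 e0110 e0111 e1110 e1111; omega
      have c24 : (b0101+b0111+b1101+b1111) % 2 = 0 := by clear * - h24 e0101 e0111 e1101 e1111; omega
      have c34 : (b0011+b0111+b1011+b1111) % 2 = 0 := by clear * - h34 e0011 e0111 e1011 e1111; omega
      have hT6 : b0001+b0010+b0011+b0100+b0101+b0110+b0111+b1000+b1001+b1010+b1011+b1100+b1101+b1110+b1111 ≤ 6 := by clear * - hm hb e0001 e0010 e0011 e0100 e0101 e0110 e0111 e1000 e1001 e1010 e1011 e1100 e1101 e1110 e1111; omega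
      obtain ⟨f1, f4⟩ := bAuxB14 b0001 b0010 b0011 b0100 b0101 b0110 b0111 b1000 b1001 b1010 b1011 b1100 b1101 b1110 b1111 c1 c4 c14 hT6
      obtain ⟨f2, f3⟩ := bAuxB23 b0001 b0010 b0011 b0100 b0101 b0110 b0111 b1000 b1001 b1010 b1011 b1100 b1101 b1110 b1111 c2 c3 c23 hT6
      have q14 : b1001+b1011+b1101+b1111 = 1 := by clear * - f4 c14; omega
      have q23 : b0110+b0111+b1110+b1111 = 1 := by clear * - f2 c23; omega
      have z1111 := bAux1111 b1000 b1001 b1010 b1011 b1100 b1101 b1110 b1111 b0110 b0111 f1 c12 c13 q14 q23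
      have z1110 := bAux1110 b1000 b1001 b1010 b1011 b1100 b1101 b1110 b1111 f1 c12 c13 q14 z1111
      obtain ⟨z1011, z1101⟩ := bAux1011 b0001 b0010 b0011 b0100 b0101 b0110 b0111 b1000 b1001 b1010 b1011 b1100 b1101 b1110 b1111 f1 f2 f3 f4 c12 c13 q14 q23 c24 c34 z1111 z1110
      obtain ⟨w0001, w0010, w0011, w0100, w0101, w0110, w0111, w1000, w1001, w1010, w1100⟩ : b0001 = 1 ∧ b0010 = 1 ∧ b0011 = 0 ∧ b0100 = 1 ∧ b0101 = 0 ∧ b0110 = 1 ∧ b0111 = 0 ∧ b1000 = 1 ∧ b1001 = 1 ∧ b1010 = 0 ∧ b1100 = 0 := bAuxRest b0001 b0010 b0011 b0100 b0101 b0110 b0111 b1000 b1001 b1010 b1011 b1100 b1101 b1110 b1111 f1 f2 f3 f4 c12 c13 q14 q23 c24 c34 z1111 z1110 z1011 z1101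
      clear * - hm e0001 e0010 e0011 e0100 e0101 e0110 e0111 e1000 e1001 e1010 e1011 e1100 e1101 e1110 e1111 w0001 w0010 w0011 w0100 w0101 w0110 w0111 w1000 w1001 w1010 w1100 z1011 z1101 z1110 z1111
      omega
    · -- a1111 odd
      exfalso
      have p1110 : a1110 % 2 = 0 := by clear * - h123 hq; omega
      have p1101 : a1101 % 2 = 1 := by clear * - h124 hq; omega
      have p1011 : a1011 % 2 = 1 := by clear * - h134 hq; omega
      have p0111 : a0111 % 2 = 1 := by clear * - h234 hq; omega
      have p1100 : a1100 % 2 = 0 := by clear * - h12 p1101 p1110 hq; omega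
      have p1010 : a1010 % 2 = 0 := by clear * - h13 p1011 p1110 hq; omega
      have p1001 : a1001 % 2 = 1 := by clear * - h14 p1011 p1101 hq; omega
      have p0110 : a0110 % 2 = 0 := by clear * - h23 p0111 p1110 hq; omega
      have p0101 : a0101 % 2 = 1 := by clear * - h24 p0111 p1101 hq; omega
      have p0011 : a0011 % 2 = 1 := by clear * - h34 p0111 p1011 hq; omega
      have p1000 : a1000 % 2 = 0 := by clear * - h1 p1001 p1010 p1011 p1100 p1101 p1110 hq; omega
      have p0100 : a0100 % 2 = 0 := by clear * - h2 p0101 p0110 p0111 p1100 p1101 p1110 hq; omega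
      have p0010 : a0010 % 2 = 0 := by clear * - h3 p0011 p0110 p0111 p1010 p1011 p1110 hq; omega
      have p0001 : a0001 % 2 = 1 := by clear * - h4 p0011 p0101 p0111 p1001 p1011 p1101 hq; omega
      obtain ⟨b0001, e0001⟩ : ∃ b, a0001 = 2*b+1 := ⟨a0001/2, by clear * - p0001; omega⟩
      obtain ⟨b0010, e0010⟩ : ∃ b, a0010 = 2*b := ⟨a0010/2, by clear * - p0010; omega⟩
      obtain ⟨b0011, e0011⟩ : ∃ b, a0011 = 2*b+1 := ⟨a0011/2, by clear * - p0011; omega⟩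
      obtain ⟨b0100, e0100⟩ : ∃ b, a0100 = 2*b := ⟨a0100/2, by clear * - p0100; omega⟩
      obtain ⟨b0101, e0101⟩ : ∃ b, a0101 = 2*b+1 := ⟨a0101/2, by clear * - p0101; omega⟩
      obtain ⟨b0110, e0110⟩ : ∃ b, a0110 = 2*b := ⟨a0110/2, by clear * - p0110; omega⟩
      obtain ⟨b0111, e0111⟩ : ∃ b, a0111 = 2*b+1 := ⟨a0111/2, by clear * - p0111; omega⟩
      obtain ⟨b1000, e1000⟩ : ∃ b, a1000 = 2*b := ⟨a1000/2, by clear * - p1000; omega⟩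
      obtain ⟨b1001, e1001⟩ : ∃ b, a1001 = 2*b+1 := ⟨a1001/2, by clear * - p1001; omega⟩
      obtain ⟨b1010, e1010⟩ : ∃ b, a1010 = 2*b := ⟨a1010/2, by clear * - p1010; omega⟩
      obtain ⟨b1011, e1011⟩ : ∃ b, a1011 = 2*b+1 := ⟨a1011/2, by clear * - p1011; omega⟩
      obtain ⟨b1100, e1100⟩ : ∃ b, a1100 = 2*b := ⟨a1100/2, by clear * - p1100; omega⟩
      obtain ⟨b1101, e1101⟩ : ∃ b, a1101 = 2*b+1 := ⟨a1101/2, by clear * - p1101; omega⟩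
      obtain ⟨b1110, e1110⟩ : ∃ b, a1110 = 2*b := ⟨a1110/2, by clear * - p1110; omega⟩
      obtain ⟨b1111, e1111⟩ : ∃ b, a1111 = 2*b+1 := ⟨a1111/2, by clear * - hq; omega⟩
      have c1 : (b1000+b1001+b1010+b1011+b1100+b1101+b1110+b1111) % 4 = 2 := by clear * - h1 e1000 e1001 e1010 e1011 e1100 e1101 e1110 e1111; omega
      have c2 : (b0100+b0101+b0110+b0111+b1100+b1101+b1110+b1111) % 4 = 2 := by clear * - h2 e0100 e0101 e0110 e0111 e1100 e1101 e1110 e1111; omega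
      have c3 : (b0010+b0011+b0110+b0111+b1010+b1011+b1110+b1111) % 4 = 2 := by clear * - h3 e0010 e0011 e0110 e0111 e1010 e1011 e1110 e1111; omega
      have c4 : (b0001+b0011+b0101+b0111+b1001+b1011+b1101+b1111) % 4 = 2 := by clear * - h4 e0001 e0011 e0101 e0111 e1001 e1011 e1101 e1111; omega
      have c12 : (b1100+b1101+b1110+b1111) % 2 = 0 := by clear * - h12 e1100 e1101 e1110 e1111; omega
      have c13 : (b1010+b1011+b1110+b1111) % 2 = 0 := by clear * - h13 e1010 e1011 e1110 e1111; omega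
      have c14 : (b1001+b1011+b1101+b1111) % 2 = 1 := by clear * - h14 e1001 e1011 e1101 e1111; omega
      have c23 : (b0110+b0111+b1110+b1111) % 2 = 1 := by clear * - h23 e0110 e0111 e1110 e1111; omega
      have c24 : (b0101+b0111+b1101+b1111) % 2 = 0 := by clear * - h24 e0101 e0111 e1101 e1111; omega
      have c34 : (b0011+b0111+b1011+b1111) % 2 = 0 := by clear * - h34 e0011 e0111 e1011 e1111; omega
      have hT6 : b0001+b0010+b0011+b0100+b0101+b0110+b0111+b1000+b1001+b1010+b1011+b1100+b1101+b1110+b1111 ≤ 6 := by clear * - hm hb e0001 e0010 e0011 e0100 e0101 e0110 e0111 e1000 e1001 e1010 e1011 e1100 e1101 e1110 e1111; omega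
      obtain ⟨f1, f4⟩ := bAuxB14 b0001 b0010 b0011 b0100 b0101 b0110 b0111 b1000 b1001 b1010 b1011 b1100 b1101 b1110 b1111 c1 c4 c14 hT6
      obtain ⟨f2, f3⟩ := bAuxB23 b0001 b0010 b0011 b0100 b0101 b0110 b0111 b1000 b1001 b1010 b1011 b1100 b1101 b1110 b1111 c2 c3 c23 hT6
      have q14 : b1001+b1011+b1101+b1111 = 1 := by clear * - f4 c14; omega
      have q23 : b0110+b0111+b1110+b1111 = 1 := by clear * - f2 c23; omega
      have z1111 := bAux1111 b1000 b1001 b1010 b1011 b1100 b1101 b1110 b1111 b0110 b0111 f1 c12 c13 q14 q23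
      have z1110 := bAux1110 b1000 b1001 b1010 b1011 b1100 b1101 b1110 b1111 f1 c12 c13 q14 z1111
      obtain ⟨z1011, z1101⟩ := bAux1011 b0001 b0010 b0011 b0100 b0101 b0110 b0111 b1000 b1001 b1010 b1011 b1100 b1101 b1110 b1111 f1 f2 f3 f4 c12 c13 q14 q23 c24 c34 z1111 z1110
      obtain ⟨w0001, w0010, w0011, w0100, w0101, w0110, w0111, w1000, w1001, w1010, w1100⟩ : b0001 = 1 ∧ b0010 = 1 ∧ b0011 = 0 ∧ b0100 = 1 ∧ b0101 = 0 ∧ b0110 = 1 ∧ b0111 = 0 ∧ b1000 = 1 ∧ b1001 = 1 ∧ b1010 = 0 ∧ b1100 = 0 := bAuxRest b0001 b0010 b0011 b0100 b0101 b0110 b0111 b1000 b1001 b1010 b1011 b1100 b1101 b1110 b1111 f1 f2 f3 f4 c12 c13 q14 q23 c24 c34 z1111 z1110 z1011 z1101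
      clear * - hm e0001 e0010 e0011 e0100 e0101 e0110 e0111 e1000 e1001 e1010 e1011 e1100 e1101 e1110 e1111 w0001 w0010 w0011 w0100 w0101 w0110 w0111 w1000 w1001 w1010 w1100 z1011 z1101 z1110 z1111 hb
      omega
  refine ⟨?_, fun h19 => (key h19.le).2⟩
  rcases le_or_gt 19 m with h | h
  · exact h
  · exact absurd (key h.le).1 (Nat.ne_of_lt h)


/-- Theorem 4.6, case of `C₁₀⁴` (characteristic vector `(0001111000)`): a doubly even
code realizing `C₁₀⁴` has degree at least 19, and in degree 19 it is, up to a
permutation of coordinates, the basic representation given in the paper. -/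
theorem stmt19 (m : ℕ) (v₁ v₂ v₃ v₄ : Fin m → ZMod 2)
    (hli : LinearIndependent (ZMod 2) ![v₁, v₂, v₃, v₄])
    (hde4 : ∀ v ∈ Submodule.span (ZMod 2) ({v₁, v₂, v₃, v₄} : Set (Fin m → ZMod 2)),
      (supp v).card % 4 = 0)
    (hde2 : ∀ u ∈ Submodule.span (ZMod 2) ({v₁, v₂, v₃, v₄} : Set (Fin m → ZMod 2)),
      ∀ v ∈ Submodule.span (ZMod 2) ({v₁, v₂, v₃, v₄} : Set (Fin m → ZMod 2)),
      (supp u ∩ supp v).card % 2 = 0)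
    (h1 : (supp v₁).card % 8 = 0) (h2 : (supp v₂).card % 8 = 0)
    (h3 : (supp v₃).card % 8 = 0) (h4 : (supp v₄).card % 8 = 4)
    (h12 : (supp v₁ ∩ supp v₂).card % 4 = 2)
    (h13 : (supp v₁ ∩ supp v₃).card % 4 = 2)
    (h14 : (supp v₁ ∩ supp v₄).card % 4 = 2)
    (h23 : (supp v₂ ∩ supp v₃).card % 4 = 0)
    (h24 : (supp v₂ ∩ supp v₄).card % 4 = 0)
    (h34 : (supp v₃ ∩ supp v₄).card % 4 = 0)
    (h123 : Odd (supp v₁ ∩ supp v₂ ∩ supp v₃).card)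
    (h124 : Even (supp v₁ ∩ supp v₂ ∩ supp v₄).card)
    (h134 : Even (supp v₁ ∩ supp v₃ ∩ supp v₄).card)
    (h234 : Even (supp v₂ ∩ supp v₃ ∩ supp v₄).card)
    (hcov : ∀ k : Fin m, ∃ v ∈ Submodule.span (ZMod 2)
      ({v₁, v₂, v₃, v₄} : Set (Fin m → ZMod 2)), v k ≠ 0) :
    19 ≤ m ∧ (m = 19 → ∃ π : Equiv.Perm (Fin m),
      Submodule.map (permMap π)
          (Submodule.span (ZMod 2) ({v₁, v₂, v₃, v₄} : Set (Fin m → ZMod 2))) =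
        Submodule.span (ZMod 2) ({indVec {1, 2, 3, 4, 5, 6, 7, 8}, indVec {1, 2, 9, 10, 11, 12, 13, 14},
          indVec {1, 3, 9, 10, 11, 15, 16, 17}, indVec {4, 5, 18, 19}} : Set (Fin m → ZMod 2))) := by
  have ha0 : (Finset.univ.filter fun k => typF v₁ v₂ v₃ v₄ k = ((0, 0, 0, 0) : Z4)).card = 0 := by
    rw [Finset.card_eq_zero, Finset.filter_eq_empty_iff]
    intro k _ htk
    obtain ⟨v, hv, hvk⟩ := hcov k
    apply hvk
    have e1 : v₁ k = 0 := congrArg (fun t : Z4 => t.1) htk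
    have e2 : v₂ k = 0 := congrArg (fun t : Z4 => t.2.1) htk
    have e3 : v₃ k = 0 := congrArg (fun t : Z4 => t.2.2.1) htk
    have e4 : v₄ k = 0 := congrArg (fun t : Z4 => t.2.2.2) htk
    have h0 : ∀ u ∈ ({v₁, v₂, v₃, v₄} : Set (Fin m → ZMod 2)), u k = 0 := by
      intro u hu
      simp only [Set.mem_insert_iff, Set.mem_singleton_iff] at hu
      rcases hu with rfl | rfl | rfl | rfl
      exacts [e1, e2, e3, e4]
    have hker : Submodule.span (ZMod 2) ({v₁, v₂, v₃, v₄} : Set (Fin m → ZMod 2)) ≤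
        LinearMap.ker (LinearMap.proj (R := ZMod 2) (φ := fun _ : Fin m => ZMod 2) k) := by
      rw [Submodule.span_le]
      intro u hu
      simp only [SetLike.mem_coe, LinearMap.mem_ker, LinearMap.proj_apply]
      exact h0 u hu
    have hk := hker hv
    rw [LinearMap.mem_ker] at hk
    exact hk
  have e1 : (supp v₁).card = (Finset.univ.filter fun k => typF v₁ v₂ v₃ v₄ k = ((1, 0, 0, 0) : Z4)).card + ((Finset.univ.filter fun k => typF v₁ v₂ v₃ v₄ k = ((1, 0, 0, 1) : Z4)).card + ((Finset.univ.filter fun k => typF v₁ v₂ v₃ v₄ k = ((1, 0, 1, 0) : Z4)).card + ((Finset.univ.filter fun k => typF v₁ v₂ v₃ v₄ k = ((1, 0, 1, 1) : Z4)).card + ((Finset.univ.filter fun k => typF v₁ v₂ v₃ v₄ k = ((1, 1, 0, 0) : Z4)).card + ((Finset.univ.filter fun k => typF v₁ v₂ v₃ v₄ k = ((1, 1, 0, 1) : Z4)).card + ((Finset.univ.filter fun k => typF v₁ v₂ v₃ v₄ k = ((1, 1, 1, 0) : Z4)).card + (Finset.univ.filter fun k => typF v₁ v₂ v₃ v₄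 k = ((1, 1, 1, 1) : Z4)).card)))))) := by
    have hs : (supp v₁) = Finset.univ.filter fun k => (typF v₁ v₂ v₃ v₄ k).1 ≠ 0 := by
      ext k; simp only [Finset.mem_filter]; simp [supp, typF]
    have h := card_filter_typ (typF v₁ v₂ v₃ v₄) (fun t : Z4 => t.1 ≠ 0)
    rw [show (Finset.univ.filter fun t : Z4 => t.1 ≠ 0) = ({((1, 0, 0, 0) : Z4), ((1, 0, 0, 1) : Z4), ((1, 0, 1, 0) : Z4), ((1, 0, 1, 1) : Z4), ((1, 1, 0, 0) : Z4), ((1, 1, 0, 1) : Z4), ((1, 1, 1, 0) : Z4), ((1, 1, 1, 1) : Z4)} : Finset Z4) from by decide] at h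
    rw [Finset.sum_insert (by decide), Finset.sum_insert (by decide), Finset.sum_insert (by decide), Finset.sum_insert (by decide), Finset.sum_insert (by decide), Finset.sum_insert (by decide), Finset.sum_insert (by decide), Finset.sum_singleton] at h
    rw [hs]; exact h
  have e2 : (supp v₂).card = (Finset.univ.filter fun k => typF v₁ v₂ v₃ v₄ k = ((0, 1, 0, 0) : Z4)).card + ((Finset.univ.filter fun k => typF v₁ v₂ v₃ v₄ k = ((0, 1, 0, 1) : Z4)).card + ((Finset.univ.filter fun k => typF v₁ v₂ v₃ v₄ k = ((0, 1, 1, 0) : Z4)).card + ((Finset.univ.filter fun k => typF v₁ v₂ v₃ v₄ k = ((0, 1, 1, 1) : Z4)).card + ((Finset.univ.filter fun k => typF v₁ v₂ v₃ v₄ k = ((1, 1, 0, 0) : Z4)).card + ((Finset.univ.filter fun k => typF v₁ v₂ v₃ v₄ k = ((1, 1, 0, 1) : Z4)).card + ((Finset.univ.filter fun k => typF v₁ v₂ v₃ v₄ k = ((1, 1, 1, 0) : Z4)).card + (Finset.univ.filter fun k => typF v₁ v₂ v₃ v₄ k = ((1, 1, 1, 1) : Z4)).card)))))) := by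
    have hs : (supp v₂) = Finset.univ.filter fun k => (typF v₁ v₂ v₃ v₄ k).2.1 ≠ 0 := by
      ext k; simp only [Finset.mem_filter]; simp [supp, typF]
    have h := card_filter_typ (typF v₁ v₂ v₃ v₄) (fun t : Z4 => t.2.1 ≠ 0)
    rw [show (Finset.univ.filter fun t : Z4 => t.2.1 ≠ 0) = ({((0, 1, 0, 0) : Z4), ((0, 1, 0, 1) : Z4), ((0, 1, 1, 0) : Z4), ((0, 1, 1, 1) : Z4), ((1, 1, 0, 0) : Z4), ((1, 1, 0, 1) : Z4), ((1, 1, 1, 0) : Z4), ((1, 1, 1, 1) : Z4)} : Finset Z4) from by decide] at h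
    rw [Finset.sum_insert (by decide), Finset.sum_insert (by decide), Finset.sum_insert (by decide), Finset.sum_insert (by decide), Finset.sum_insert (by decide), Finset.sum_insert (by decide), Finset.sum_insert (by decide), Finset.sum_singleton] at h
    rw [hs]; exact h
  have e3 : (supp v₃).card = (Finset.univ.filter fun k => typF v₁ v₂ v₃ v₄ k = ((0, 0, 1, 0) : Z4)).card + ((Finset.univ.filter fun k => typF v₁ v₂ v₃ v₄ k = ((0, 0, 1, 1) : Z4)).card + ((Finset.univ.filter fun k => typF v₁ v₂ v₃ v₄ k = ((0, 1, 1, 0) : Z4)).card + ((Finset.univ.filter fun k => typF v₁ v₂ v₃ v₄ k = ((0, 1, 1, 1) : Z4)).card + ((Finset.univ.filter fun k => typF v₁ v₂ v₃ v₄ k = ((1, 0, 1, 0) : Z4)).card + ((Finset.univ.filter fun k => typF v₁ v₂ v₃ v₄ k = ((1, 0, 1, 1) : Z4)).card + ((Finset.univ.filter fun k => typF v₁ v₂ v₃ v₄ k = ((1, 1, 1, 0) : Z4)).card + (Finset.univ.filter fun k => typF v₁ v₂ v₃ v₄ k = ((1, 1, 1, 1) : Z4)).card)))))) := by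
    have hs : (supp v₃) = Finset.univ.filter fun k => (typF v₁ v₂ v₃ v₄ k).2.2.1 ≠ 0 := by
      ext k; simp only [Finset.mem_filter]; simp [supp, typF]
    have h := card_filter_typ (typF v₁ v₂ v₃ v₄) (fun t : Z4 => t.2.2.1 ≠ 0)
    rw [show (Finset.univ.filter fun t : Z4 => t.2.2.1 ≠ 0) = ({((0, 0, 1, 0) : Z4), ((0, 0, 1, 1) : Z4), ((0, 1, 1, 0) : Z4), ((0, 1, 1, 1) : Z4), ((1, 0, 1, 0) : Z4), ((1, 0, 1, 1) : Z4), ((1, 1, 1, 0) : Z4), ((1, 1, 1, 1) : Z4)} : Finset Z4) from by decide] at h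
    rw [Finset.sum_insert (by decide), Finset.sum_insert (by decide), Finset.sum_insert (by decide), Finset.sum_insert (by decide), Finset.sum_insert (by decide), Finset.sum_insert (by decide), Finset.sum_insert (by decide), Finset.sum_singleton] at h
    rw [hs]; exact h
  have e4 : (supp v₄).card = (Finset.univ.filter fun k => typF v₁ v₂ v₃ v₄ k = ((0, 0, 0, 1) : Z4)).card + ((Finset.univ.filter fun k => typF v₁ v₂ v₃ v₄ k = ((0, 0, 1, 1) : Z4)).card + ((Finset.univ.filter fun k => typF v₁ v₂ v₃ v₄ k = ((0, 1, 0, 1) : Z4)).card + ((Finset.univ.filter fun k => typF v₁ v₂ v₃ v₄ k = ((0, 1, 1, 1) : Z4)).card + ((Finset.univ.filter fun k => typF v₁ v₂ v₃ v₄ k = ((1, 0, 0, 1) : Z4)).card + ((Finset.univ.filter fun k => typF v₁ v₂ v₃ v₄ k = ((1, 0, 1, 1) : Z4)).card + ((Finset.univ.filter fun k => typF v₁ v₂ v₃ v₄ k = ((1, 1, 0, 1) : Z4)).card + (Finset.univ.filter fun k => typF v₁ v₂ v₃ v₄ k = ((1, 1, 1, 1) : Z4)).card)))))) := by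
    have hs : (supp v₄) = Finset.univ.filter fun k => (typF v₁ v₂ v₃ v₄ k).2.2.2 ≠ 0 := by
      ext k; simp only [Finset.mem_filter]; simp [supp, typF]
    have h := card_filter_typ (typF v₁ v₂ v₃ v₄) (fun t : Z4 => t.2.2.2 ≠ 0)
    rw [show (Finset.univ.filter fun t : Z4 => t.2.2.2 ≠ 0) = ({((0, 0, 0, 1) : Z4), ((0, 0, 1, 1) : Z4), ((0, 1, 0, 1) : Z4), ((0, 1, 1, 1) : Z4), ((1, 0, 0, 1) : Z4), ((1, 0, 1, 1) : Z4), ((1, 1, 0, 1) : Z4), ((1, 1, 1, 1) : Z4)} : Finset Z4) from by decide] at h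
    rw [Finset.sum_insert (by decide), Finset.sum_insert (by decide), Finset.sum_insert (by decide), Finset.sum_insert (by decide), Finset.sum_insert (by decide), Finset.sum_insert (by decide), Finset.sum_insert (by decide), Finset.sum_singleton] at h
    rw [hs]; exact h
  have e12 : (supp v₁ ∩ supp v₂).card = (Finset.univ.filter fun k => typF v₁ v₂ v₃ v₄ k = ((1, 1, 0, 0) : Z4)).card + ((Finset.univ.filter fun k => typF v₁ v₂ v₃ v₄ k = ((1, 1, 0, 1) : Z4)).card + ((Finset.univ.filter fun k => typF v₁ v₂ v₃ v₄ k = ((1, 1, 1, 0) : Z4)).card + (Finset.univ.filter fun k => typF v₁ v₂ v₃ v₄ k = ((1, 1, 1, 1) : Z4)).card)) := by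
    have hs : (supp v₁ ∩ supp v₂) = Finset.univ.filter fun k => (typF v₁ v₂ v₃ v₄ k).1 ≠ 0 ∧ (typF v₁ v₂ v₃ v₄ k).2.1 ≠ 0 := by
      ext k; simp only [Finset.mem_filter]; simp [supp, typF]
    have h := card_filter_typ (typF v₁ v₂ v₃ v₄) (fun t : Z4 => t.1 ≠ 0 ∧ t.2.1 ≠ 0)
    rw [show (Finset.univ.filter fun t : Z4 => t.1 ≠ 0 ∧ t.2.1 ≠ 0) = ({((1, 1, 0, 0) : Z4), ((1, 1, 0, 1) : Z4), ((1, 1, 1, 0) : Z4), ((1, 1, 1, 1) : Z4)} : Finset Z4) from by decide] at h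
    rw [Finset.sum_insert (by decide), Finset.sum_insert (by decide), Finset.sum_insert (by decide), Finset.sum_singleton] at h
    rw [hs]; exact h
  have e13 : (supp v₁ ∩ supp v₃).card = (Finset.univ.filter fun k => typF v₁ v₂ v₃ v₄ k = ((1, 0, 1, 0) : Z4)).card + ((Finset.univ.filter fun k => typF v₁ v₂ v₃ v₄ k = ((1, 0, 1, 1) : Z4)).card + ((Finset.univ.filter fun k => typF v₁ v₂ v₃ v₄ k = ((1, 1, 1, 0) : Z4)).card + (Finset.univ.filter fun k => typF v₁ v₂ v₃ v₄ k = ((1, 1, 1, 1) : Z4)).card)) := by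
    have hs : (supp v₁ ∩ supp v₃) = Finset.univ.filter fun k => (typF v₁ v₂ v₃ v₄ k).1 ≠ 0 ∧ (typF v₁ v₂ v₃ v₄ k).2.2.1 ≠ 0 := by
      ext k; simp only [Finset.mem_filter]; simp [supp, typF]
    have h := card_filter_typ (typF v₁ v₂ v₃ v₄) (fun t : Z4 => t.1 ≠ 0 ∧ t.2.2.1 ≠ 0)
    rw [show (Finset.univ.filter fun t : Z4 => t.1 ≠ 0 ∧ t.2.2.1 ≠ 0) = ({((1, 0, 1, 0) : Z4), ((1, 0, 1, 1) : Z4), ((1, 1, 1, 0) : Z4), ((1, 1, 1, 1) : Z4)} : Finset Z4) from by decide] at h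
    rw [Finset.sum_insert (by decide), Finset.sum_insert (by decide), Finset.sum_insert (by decide), Finset.sum_singleton] at h
    rw [hs]; exact h
  have e14 : (supp v₁ ∩ supp v₄).card = (Finset.univ.filter fun k => typF v₁ v₂ v₃ v₄ k = ((1, 0, 0, 1) : Z4)).card + ((Finset.univ.filter fun k => typF v₁ v₂ v₃ v₄ k = ((1, 0, 1, 1) : Z4)).card + ((Finset.univ.filter fun k => typF v₁ v₂ v₃ v₄ k = ((1, 1, 0, 1) : Z4)).card + (Finset.univ.filter fun k => typF v₁ v₂ v₃ v₄ k = ((1, 1, 1, 1) : Z4)).card)) := by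
    have hs : (supp v₁ ∩ supp v₄) = Finset.univ.filter fun k => (typF v₁ v₂ v₃ v₄ k).1 ≠ 0 ∧ (typF v₁ v₂ v₃ v₄ k).2.2.2 ≠ 0 := by
      ext k; simp only [Finset.mem_filter]; simp [supp, typF]
    have h := card_filter_typ (typF v₁ v₂ v₃ v₄) (fun t : Z4 => t.1 ≠ 0 ∧ t.2.2.2 ≠ 0)
    rw [show (Finset.univ.filter fun t : Z4 => t.1 ≠ 0 ∧ t.2.2.2 ≠ 0) = ({((1, 0, 0, 1) : Z4), ((1, 0, 1, 1) : Z4), ((1, 1, 0, 1) : Z4), ((1, 1, 1, 1) : Z4)} : Finset Z4) from by decide] at h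
    rw [Finset.sum_insert (by decide), Finset.sum_insert (by decide), Finset.sum_insert (by decide), Finset.sum_singleton] at h
    rw [hs]; exact h
  have e23 : (supp v₂ ∩ supp v₃).card = (Finset.univ.filter fun k => typF v₁ v₂ v₃ v₄ k = ((0, 1, 1, 0) : Z4)).card + ((Finset.univ.filter fun k => typF v₁ v₂ v₃ v₄ k = ((0, 1, 1, 1) : Z4)).card + ((Finset.univ.filter fun k => typF v₁ v₂ v₃ v₄ k = ((1, 1, 1, 0) : Z4)).card + (Finset.univ.filter fun k => typF v₁ v₂ v₃ v₄ k = ((1, 1, 1, 1) : Z4)).card)) := by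
    have hs : (supp v₂ ∩ supp v₃) = Finset.univ.filter fun k => (typF v₁ v₂ v₃ v₄ k).2.1 ≠ 0 ∧ (typF v₁ v₂ v₃ v₄ k).2.2.1 ≠ 0 := by
      ext k; simp only [Finset.mem_filter]; simp [supp, typF]
    have h := card_filter_typ (typF v₁ v₂ v₃ v₄) (fun t : Z4 => t.2.1 ≠ 0 ∧ t.2.2.1 ≠ 0)
    rw [show (Finset.univ.filter fun t : Z4 => t.2.1 ≠ 0 ∧ t.2.2.1 ≠ 0) = ({((0, 1, 1, 0) : Z4), ((0, 1, 1, 1) : Z4), ((1, 1, 1, 0) : Z4), ((1, 1, 1, 1) : Z4)} : Finset Z4) from by decide] at h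
    rw [Finset.sum_insert (by decide), Finset.sum_insert (by decide), Finset.sum_insert (by decide), Finset.sum_singleton] at h
    rw [hs]; exact h
  have e24 : (supp v₂ ∩ supp v₄).card = (Finset.univ.filter fun k => typF v₁ v₂ v₃ v₄ k = ((0, 1, 0, 1) : Z4)).card + ((Finset.univ.filter fun k => typF v₁ v₂ v₃ v₄ k = ((0, 1, 1, 1) : Z4)).card + ((Finset.univ.filter fun k => typF v₁ v₂ v₃ v₄ k = ((1, 1, 0, 1) : Z4)).card + (Finset.univ.filter fun k => typF v₁ v₂ v₃ v₄ k = ((1, 1, 1, 1) : Z4)).card)) := by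
    have hs : (supp v₂ ∩ supp v₄) = Finset.univ.filter fun k => (typF v₁ v₂ v₃ v₄ k).2.1 ≠ 0 ∧ (typF v₁ v₂ v₃ v₄ k).2.2.2 ≠ 0 := by
      ext k; simp only [Finset.mem_filter]; simp [supp, typF]
    have h := card_filter_typ (typF v₁ v₂ v₃ v₄) (fun t : Z4 => t.2.1 ≠ 0 ∧ t.2.2.2 ≠ 0)
    rw [show (Finset.univ.filter fun t : Z4 => t.2.1 ≠ 0 ∧ t.2.2.2 ≠ 0) = ({((0, 1, 0, 1) : Z4), ((0, 1, 1, 1) : Z4), ((1, 1, 0, 1) : Z4), ((1, 1, 1, 1) : Z4)} : Finset Z4) from by decide] at h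
    rw [Finset.sum_insert (by decide), Finset.sum_insert (by decide), Finset.sum_insert (by decide), Finset.sum_singleton] at h
    rw [hs]; exact h
  have e34 : (supp v₃ ∩ supp v₄).card = (Finset.univ.filter fun k => typF v₁ v₂ v₃ v₄ k = ((0, 0, 1, 1) : Z4)).card + ((Finset.univ.filter fun k => typF v₁ v₂ v₃ v₄ k = ((0, 1, 1, 1) : Z4)).card + ((Finset.univ.filter fun k => typF v₁ v₂ v₃ v₄ k = ((1, 0, 1, 1) : Z4)).card + (Finset.univ.filter fun k => typF v₁ v₂ v₃ v₄ k = ((1, 1, 1, 1) : Z4)).card)) := by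
    have hs : (supp v₃ ∩ supp v₄) = Finset.univ.filter fun k => (typF v₁ v₂ v₃ v₄ k).2.2.1 ≠ 0 ∧ (typF v₁ v₂ v₃ v₄ k).2.2.2 ≠ 0 := by
      ext k; simp only [Finset.mem_filter]; simp [supp, typF]
    have h := card_filter_typ (typF v₁ v₂ v₃ v₄) (fun t : Z4 => t.2.2.1 ≠ 0 ∧ t.2.2.2 ≠ 0)
    rw [show (Finset.univ.filter fun t : Z4 => t.2.2.1 ≠ 0 ∧ t.2.2.2 ≠ 0) = ({((0, 0, 1, 1) : Z4), ((0, 1, 1, 1) : Z4), ((1, 0, 1, 1) : Z4), ((1, 1, 1, 1) : Z4)} : Finset Z4) from by decide] at h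
    rw [Finset.sum_insert (by decide), Finset.sum_insert (by decide), Finset.sum_insert (by decide), Finset.sum_singleton] at h
    rw [hs]; exact h
  have e123 : (supp v₁ ∩ supp v₂ ∩ supp v₃).card = (Finset.univ.filter fun k => typF v₁ v₂ v₃ v₄ k = ((1, 1, 1, 0) : Z4)).card + (Finset.univ.filter fun k => typF v₁ v₂ v₃ v₄ k = ((1, 1, 1, 1) : Z4)).card := by
    have hs : (supp v₁ ∩ supp v₂ ∩ supp v₃) = Finset.univ.filter fun k => (typF v₁ v₂ v₃ v₄ k).1 ≠ 0 ∧ (typF v₁ v₂ v₃ v₄ k).2.1 ≠ 0 ∧ (typF v₁ v₂ v₃ v₄ k).2.2.1 ≠ 0 := by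
      ext k; simp only [Finset.mem_filter]; simp [supp, typF]
    have h := card_filter_typ (typF v₁ v₂ v₃ v₄) (fun t : Z4 => t.1 ≠ 0 ∧ t.2.1 ≠ 0 ∧ t.2.2.1 ≠ 0)
    rw [show (Finset.univ.filter fun t : Z4 => t.1 ≠ 0 ∧ t.2.1 ≠ 0 ∧ t.2.2.1 ≠ 0) = ({((1, 1, 1, 0) : Z4), ((1, 1, 1, 1) : Z4)} : Finset Z4) from by decide] at h
    rw [Finset.sum_insert (by decide), Finset.sum_singleton] at h
    rw [hs]; exact h
  have e124 : (supp v₁ ∩ supp v₂ ∩ supp v₄).card = (Finset.univ.filter fun k => typF v₁ v₂ v₃ v₄ k = ((1, 1, 0, 1) : Z4)).card + (Finset.univ.filter fun k => typF v₁ v₂ v₃ v₄ k = ((1, 1, 1, 1) : Z4)).card := by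
    have hs : (supp v₁ ∩ supp v₂ ∩ supp v₄) = Finset.univ.filter fun k => (typF v₁ v₂ v₃ v₄ k).1 ≠ 0 ∧ (typF v₁ v₂ v₃ v₄ k).2.1 ≠ 0 ∧ (typF v₁ v₂ v₃ v₄ k).2.2.2 ≠ 0 := by
      ext k; simp only [Finset.mem_filter]; simp [supp, typF]
    have h := card_filter_typ (typF v₁ v₂ v₃ v₄) (fun t : Z4 => t.1 ≠ 0 ∧ t.2.1 ≠ 0 ∧ t.2.2.2 ≠ 0)
    rw [show (Finset.univ.filter fun t : Z4 => t.1 ≠ 0 ∧ t.2.1 ≠ 0 ∧ t.2.2.2 ≠ 0) = ({((1, 1, 0, 1) : Z4), ((1, 1, 1, 1) : Z4)} : Finset Z4) from by decide] at h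
    rw [Finset.sum_insert (by decide), Finset.sum_singleton] at h
    rw [hs]; exact h
  have e134 : (supp v₁ ∩ supp v₃ ∩ supp v₄).card = (Finset.univ.filter fun k => typF v₁ v₂ v₃ v₄ k = ((1, 0, 1, 1) : Z4)).card + (Finset.univ.filter fun k => typF v₁ v₂ v₃ v₄ k = ((1, 1, 1, 1) : Z4)).card := by
    have hs : (supp v₁ ∩ supp v₃ ∩ supp v₄) = Finset.univ.filter fun k => (typF v₁ v₂ v₃ v₄ k).1 ≠ 0 ∧ (typF v₁ v₂ v₃ v₄ k).2.2.1 ≠ 0 ∧ (typF v₁ v₂ v₃ v₄ k).2.2.2 ≠ 0 := by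
      ext k; simp only [Finset.mem_filter]; simp [supp, typF]
    have h := card_filter_typ (typF v₁ v₂ v₃ v₄) (fun t : Z4 => t.1 ≠ 0 ∧ t.2.2.1 ≠ 0 ∧ t.2.2.2 ≠ 0)
    rw [show (Finset.univ.filter fun t : Z4 => t.1 ≠ 0 ∧ t.2.2.1 ≠ 0 ∧ t.2.2.2 ≠ 0) = ({((1, 0, 1, 1) : Z4), ((1, 1, 1, 1) : Z4)} : Finset Z4) from by decide] at h
    rw [Finset.sum_insert (by decide), Finset.sum_singleton] at h
    rw [hs]; exact h
  have e234 : (supp v₂ ∩ supp v₃ ∩ supp v₄).card = (Finset.univ.filter fun k => typF v₁ v₂ v₃ v₄ k = ((0, 1, 1, 1) : Z4)).card + (Finset.univ.filter fun k => typF v₁ v₂ v₃ v₄ k = ((1, 1, 1, 1) : Z4)).card := by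
    have hs : (supp v₂ ∩ supp v₃ ∩ supp v₄) = Finset.univ.filter fun k => (typF v₁ v₂ v₃ v₄ k).2.1 ≠ 0 ∧ (typF v₁ v₂ v₃ v₄ k).2.2.1 ≠ 0 ∧ (typF v₁ v₂ v₃ v₄ k).2.2.2 ≠ 0 := by
      ext k; simp only [Finset.mem_filter]; simp [supp, typF]
    have h := card_filter_typ (typF v₁ v₂ v₃ v₄) (fun t : Z4 => t.2.1 ≠ 0 ∧ t.2.2.1 ≠ 0 ∧ t.2.2.2 ≠ 0)
    rw [show (Finset.univ.filter fun t : Z4 => t.2.1 ≠ 0 ∧ t.2.2.1 ≠ 0 ∧ t.2.2.2 ≠ 0) = ({((0, 1, 1, 1) : Z4), ((1, 1, 1, 1) : Z4)} : Finset Z4) from by decide] at h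
    rw [Finset.sum_insert (by decide), Finset.sum_singleton] at h
    rw [hs]; exact h
  have em : m = (Finset.univ.filter fun k => typF v₁ v₂ v₃ v₄ k = ((0, 0, 0, 0) : Z4)).card + ((Finset.univ.filter fun k => typF v₁ v₂ v₃ v₄ k = ((0, 0, 0, 1) : Z4)).card + ((Finset.univ.filter fun k => typF v₁ v₂ v₃ v₄ k = ((0, 0, 1, 0) : Z4)).card + ((Finset.univ.filter fun k => typF v₁ v₂ v₃ v₄ k = ((0, 0, 1, 1) : Z4)).card + ((Finset.univ.filter fun k => typF v₁ v₂ v₃ v₄ k = ((0, 1, 0, 0) : Z4)).card + ((Finset.univ.filter fun k => typF v₁ v₂ v₃ v₄ k = ((0, 1, 0, 1) : Z4)).card + ((Finset.univ.filter fun k => typF v₁ v₂ v₃ v₄ k = ((0, 1, 1, 0) : Z4)).card + ((Finset.univ.filter fun k => typF v₁ v₂ v₃ v₄ k = ((0, 1, 1, 1) : Z4)).card + ((Finset.univ.filter fun k => typF v₁ v₂ v₃ v₄ k = ((1, 0, 0, 0) : Z4)).card + ((Finset.univ.filter fun k => typF v₁ v₂ v₃ v₄ k = ((1, 0, 0, 1)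 : Z4)).card + ((Finset.univ.filter fun k => typF v₁ v₂ v₃ v₄ k = ((1, 0, 1, 0) : Z4)).card + ((Finset.univ.filter fun k => typF v₁ v₂ v₃ v₄ k = ((1, 0, 1, 1) : Z4)).card + ((Finset.univ.filter fun k => typF v₁ v₂ v₃ v₄ k = ((1, 1, 0, 0) : Z4)).card + ((Finset.univ.filter fun k => typF v₁ v₂ v₃ v₄ k = ((1, 1, 0, 1) : Z4)).card + ((Finset.univ.filter fun k => typF v₁ v₂ v₃ v₄ k = ((1, 1, 1, 0) : Z4)).card + (Finset.univ.filter fun k => typF v₁ v₂ v₃ v₄ k = ((1, 1, 1, 1) : Z4)).card)))))))))))))) := by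
    have h := Finset.card_eq_sum_card_fiberwise (f := typF v₁ v₂ v₃ v₄) (s := Finset.univ) (t := Finset.univ) (fun x _ => Finset.mem_univ _)
    rw [show (Finset.univ : Finset Z4) = ({((0, 0, 0, 0) : Z4), ((0, 0, 0, 1) : Z4), ((0, 0, 1, 0) : Z4), ((0, 0, 1, 1) : Z4), ((0, 1, 0, 0) : Z4), ((0, 1, 0, 1) : Z4), ((0, 1, 1, 0) : Z4), ((0, 1, 1, 1) : Z4), ((1, 0, 0, 0) : Z4), ((1, 0, 0, 1) : Z4), ((1, 0, 1, 0) : Z4), ((1, 0, 1, 1) : Z4), ((1, 1, 0, 0) : Z4), ((1, 1, 0, 1) : Z4), ((1, 1, 1, 0) : Z4), ((1, 1, 1, 1) : Z4)} : Finset Z4) from by decide] at h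
    rw [Finset.sum_insert (by decide), Finset.sum_insert (by decide), Finset.sum_insert (by decide), Finset.sum_insert (by decide), Finset.sum_insert (by decide), Finset.sum_insert (by decide), Finset.sum_insert (by decide), Finset.sum_insert (by decide), Finset.sum_insert (by decide), Finset.sum_insert (by decide), Finset.sum_insert (by decide), Finset.sum_insert (by decide), Finset.sum_insert (by decide), Finset.sum_insert (by decide), Finset.sum_insert (by decide), Finset.sum_singleton] at h
    rw [Finset.card_fin] at h
    exact h
  have hm' := em
  rw [ha0, Nat.zero_add] at hm'
  rw [e1] at h1
  rw [e2] at h2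
  rw [e3] at h3
  rw [e4] at h4
  rw [e12] at h12
  rw [e13] at h13
  rw [e14] at h14
  rw [e23] at h23
  rw [e24] at h24
  rw [e34] at h34
  rw [Nat.odd_iff] at h123
  rw [e123] at h123
  rw [Nat.even_iff] at h124
  rw [e124] at h124
  rw [Nat.even_iff] at h134
  rw [e134] at h134
  rw [Nat.even_iff] at h234
  rw [e234] at h234
  have main := aCore
      ((Finset.univ.filter fun k => typF v₁ v₂ v₃ v₄ k = ((0, 0, 0, 1) : Z4)).card)
      ((Finset.univ.filter fun k => typF v₁ v₂ v₃ v₄ k = ((0, 0, 1, 0) : Z4)).card)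
      ((Finset.univ.filter fun k => typF v₁ v₂ v₃ v₄ k = ((0, 0, 1, 1) : Z4)).card)
      ((Finset.univ.filter fun k => typF v₁ v₂ v₃ v₄ k = ((0, 1, 0, 0) : Z4)).card)
      ((Finset.univ.filter fun k => typF v₁ v₂ v₃ v₄ k = ((0, 1, 0, 1) : Z4)).card)
      ((Finset.univ.filter fun k => typF v₁ v₂ v₃ v₄ k = ((0, 1, 1, 0) : Z4)).card)
      ((Finset.univ.filter fun k => typF v₁ v₂ v₃ v₄ k = ((0, 1, 1, 1) : Z4)).card)
      ((Finset.univ.filter fun k => typF v₁ v₂ v₃ v₄ k = ((1, 0, 0, 0) : Z4)).card)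
      ((Finset.univ.filter fun k => typF v₁ v₂ v₃ v₄ k = ((1, 0, 0, 1) : Z4)).card)
      ((Finset.univ.filter fun k => typF v₁ v₂ v₃ v₄ k = ((1, 0, 1, 0) : Z4)).card)
      ((Finset.univ.filter fun k => typF v₁ v₂ v₃ v₄ k = ((1, 0, 1, 1) : Z4)).card)
      ((Finset.univ.filter fun k => typF v₁ v₂ v₃ v₄ k = ((1, 1, 0, 0) : Z4)).card)
      ((Finset.univ.filter fun k => typF v₁ v₂ v₃ v₄ k = ((1, 1, 0, 1) : Z4)).card)
      ((Finset.univ.filter fun k => typF v₁ v₂ v₃ v₄ k = ((1, 1, 1, 0) : Z4)).card)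
      ((Finset.univ.filter fun k => typF v₁ v₂ v₃ v₄ k = ((1, 1, 1, 1) : Z4)).card)
      m hm' h1 h2 h3 h4 h12 h13 h14 h23 h24 h34 h123 h124 h134 h234

  refine ⟨main.1, fun hm19 => ?_⟩
  have hvals := main.2 hm19
  subst hm19
  obtain ⟨q0001, q0010, q0011, q0100, q0101, q0110, q0111, q1000, q1001, q1010, q1011, q1100, q1101, q1110, q1111⟩ := hvals
  have hfib : ∀ t : Z4, (Finset.univ.filter fun k => typF v₁ v₂ v₃ v₄ k = t).card
      = (Finset.univ.filter fun k : Fin 19 => typF (indVec {1, 2, 3, 4, 5, 6, 7, 8}) (indVec {1, 2, 9, 10, 11, 12, 13, 14}) (indVec {1, 3, 9, 10, 11, 15, 16, 17}) (indVec {4, 5, 18, 19}) k = t).card := by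
    intro t
    obtain ⟨x, y, z, w⟩ := t
    have h2 : ∀ u : ZMod 2, u = 0 ∨ u = 1 := by decide
    rcases h2 x with rfl | rfl <;> rcases h2 y with rfl | rfl <;> rcases h2 z with rfl | rfl <;> rcases h2 w with rfl | rfl
    · rw [ha0]; decide
    · rw [q0001]; decide
    · rw [q0010]; decide
    · rw [q0011]; decide
    · rw [q0100]; decide
    · rw [q0101]; decide
    · rw [q0110]; decide
    · rw [q0111]; decide
    · rw [q1000]; decide
    · rw [q1001]; decide
    · rw [q1010]; decide
    · rw [q1011]; decide
    · rw [q1100]; decide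
    · rw [q1101]; decide
    · rw [q1110]; decide
    · rw [q1111]; decide
  obtain ⟨π, hπ⟩ := exists_perm_of_card_fiber_eq _ _ hfib
  refine ⟨π, ?_⟩
  have i1 : (permMap π) v₁ = indVec {1, 2, 3, 4, 5, 6, 7, 8} := funext fun k => congrArg (fun t : Z4 => t.1) (hπ k)
  have i2 : (permMap π) v₂ = indVec {1, 2, 9, 10, 11, 12, 13, 14} := funext fun k => congrArg (fun t : Z4 => t.2.1) (hπ k)
  have i3 : (permMap π) v₃ = indVec {1, 3, 9, 10, 11, 15, 16, 17} := funext fun k => congrArg (fun t : Z4 => t.2.2.1) (hπ k)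
  have i4 : (permMap π) v₄ = indVec {4, 5, 18, 19} := funext fun k => congrArg (fun t : Z4 => t.2.2.2) (hπ k)
  rw [Submodule.map_span, Set.image_insert_eq, Set.image_insert_eq, Set.image_insert_eq, Set.image_singleton, i1, i2, i3, i4]
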